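/- Let F be a linear ordered field equipped with its order topology, X a completely F-regular space, and A(X,F) an intermediate ring. For f ∈ A(X,F), f is a divisor of zero in A(X,F) (there exists g ∈ A(X,F), g ≠ 0, with f·g = 0) if and only if int_X Z(f) ≠ ∅. -/

import Mathlib

open Set

/-- `Pz a` : the intersection of all minimal prime ideals of `R` which contain `a`. -/
def Pz {R : Type*} [CommRing R] (a : R) : Set R :=
  ⋂ P ∈ {P : Ideal R | P ∈ minimalPrimes R ∧ a ∈ P}, (P : Set R)

/-- A proper ideal `I` is a `z°`-ideal if `Pz a ⊆ I` for every `a ∈ I`. -/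
def IsZoIdeal {R : Type*} [CommRing R] (I : Ideal R) : Prop :=
  I ≠ ⊤ ∧ ∀ a ∈ I, Pz a ⊆ (I : Set R)

/-- The zero set `Z(f)` of a continuous function `f`. -/
def ZSet {X F : Type*} [TopologicalSpace X] [TopologicalSpace F] [Zero F]
    (f : C(X, F)) : Set X := {x | f x = 0}

/-- `f` is bounded over `X` (i.e. `f ∈ B(X,F)`). -/
def BddF {X F : Type*} [TopologicalSpace X] [Field F] [LinearOrder F] [IsStrictOrderedRing F] [TopologicalSpace F]
    (f : C(X, F)) : Prop := ∃ l : F, 0 < l ∧ ∀ x, |f x| ≤ l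

/-- `X` is completely `F`-regular: Hausdorff, and points can be separated from closed
sets by bounded `F`-valued continuous functions. -/
def CompletelyFRegular (X F : Type*) [TopologicalSpace X] [Field F] [LinearOrder F] [IsStrictOrderedRing F]
    [TopologicalSpace F] : Prop :=
  T2Space X ∧ ∀ K : Set X, IsClosed K → ∀ x ∉ K, ∃ f : C(X, F),
    BddF f ∧ f x = 0 ∧ ∀ k ∈ K, f k = 1

/-- `A` is an intermediate ring: a subring of `C(X,F)` containing all of `B(X,F)`. -/
def IsIntermediate {X F : Type*} [TopologicalSpace X] [Field F] [LinearOrder F] [IsStrictOrderedRing F]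
    [TopologicalSpace F] [OrderTopology F] (A : Subring C(X, F)) : Prop :=
  ∀ f : C(X, F), BddF f → f ∈ A

/-- An ideal of closed sets in `X`: a nonempty family of closed sets, closed under
finite unions and under passing to closed subsets. -/
def IsIdealOfClosedSets {X : Type*} [TopologicalSpace X] (P : Set (Set X)) : Prop :=
  P.Nonempty ∧ (∀ A ∈ P, IsClosed A) ∧ (∀ A ∈ P, ∀ B ∈ P, A ∪ B ∈ P) ∧
    ∀ C : Set X, IsClosed C → ∀ A ∈ P, C ⊆ A → C ∈ P

/-- `X` is an almost `P_F`-space: every nonempty zero set has nonempty interior. -/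
def AlmostPF (X F : Type*) [TopologicalSpace X] [Field F] [LinearOrder F] [IsStrictOrderedRing F]
    [TopologicalSpace F] : Prop :=
  ∀ f : C(X, F), (ZSet f).Nonempty → (interior (ZSet f)).Nonempty


/-- f in A(X,F) is a divisor of zero iff int_X Z(f) is nonempty. -/
theorem stmt17 {X F : Type*} [TopologicalSpace X] [Field F] [LinearOrder F] [IsStrictOrderedRing F]
    [TopologicalSpace F] [OrderTopology F]
    (hX : CompletelyFRegular X F)
    (A : Subring C(X, F)) (hA : IsIntermediate A)
    (f : A) :
    (∃ g : A, g ≠ 0 ∧ f * g = 0) ↔ (interior (ZSet (f : C(X, F)))).Nonempty := by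
  constructor
  · rintro ⟨g, hg0, hfg⟩
    have hgne : (g : C(X, F)) ≠ 0 := by
      intro h; exact hg0 (Subtype.ext h)
    obtain ⟨x, hx⟩ : ∃ x, (g : C(X, F)) x ≠ 0 := by
      by_contra h
      push_neg at h
      exact hgne (ContinuousMap.ext fun x => h x)
    have hU : IsOpen {y | (g : C(X, F)) y ≠ 0} :=
      isOpen_compl_singleton.preimage (g : C(X, F)).continuous
    have hsub : {y | (g : C(X, F)) y ≠ 0} ⊆ ZSet (f : C(X, F)) := by
      intro y hy
      have : ((f : C(X, F)) * (g : C(X, F))) y = 0 := by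
        have : ((f * g : A) : C(X, F)) = 0 := by rw [hfg]; rfl
        have := DFunLike.congr_fun this y
        simpa using this
      have hmul : (f : C(X, F)) y * (g : C(X, F)) y = 0 := this
      have := mul_eq_zero.mp hmul
      rcases this with h | h
      · exact h
      · exact absurd h hy
    exact ⟨x, interior_maximal hsub hU hx⟩
  · rintro ⟨x, hx⟩
    obtain ⟨_, hreg⟩ := hX
    have hK : IsClosed (interior (ZSet (f : C(X, F))))ᶜ := isOpen_interior.isClosed_compl
    obtain ⟨h, hb, hx0, hK1⟩ := hreg _ hK x (by simpa using hx)
    set g : C(X, F) := 1 - h with hg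
    have hgb : BddF g := by
      obtain ⟨l, hl, hbd⟩ := hb
      refine ⟨l + 1, by linarith, fun y => ?_⟩
      have := hbd y
      have h1 : |g y| ≤ |(1 : F)| + |h y| := by
        simpa [hg, sub_eq_add_neg, abs_neg] using abs_add_le (1 : F) (-(h y))
      simp only [abs_one] at h1
      linarith
    have hgA : g ∈ A := hA g hgb
    refine ⟨⟨g, hgA⟩, ?_, ?_⟩
    · intro h0
      have : g x = 0 := by
        have := congrArg Subtype.val h0
        exact DFunLike.congr_fun this x
      simp [hg, hx0] at this
    · apply Subtype.ext
      apply ContinuousMap.ext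
      intro y
      by_cases hy : y ∈ interior (ZSet (f : C(X, F)))
      · have hmem : y ∈ ZSet (f : C(X, F)) := interior_subset hy
        have hfy : (f : C(X, F)) y = 0 := hmem
        simp [hfy]
      · have : g y = 0 := by simp [hg, hK1 y hy]
        simp [this]
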